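/- arXiv:1903.02050 — 3 statements merged into one kernel-verified Lean document; each statement's English description precedes it below -/
import Mathlib

section
/- Let TP_a, FP_a, TN_a, FN_a and TP_b, FP_b, TN_b, FN_b be nonnegative real numbers (confusion-matrix counts of two models A and B on the same data) satisfying: TP_a + FN_a = TP_b + FN_b > 0 (equal number of positive samples), FP_a + TN_a = FP_b + TN_b > 0 (equal number of negative samples), TN_a + FN_a = TN_b + FN_b > 0 (equal coverage), and FN_a/(TN_a + FN_a) < FN_b/(TN_b + FN_b) (A has strictly lower risk at this coverage). Then TP_a/(TP_a + FN_a) > TP_b/(TP_b + FN_b) (A has strictly higher true positive rate) and FP_a/(FP_a + TN_a) < FP_b/(FP_b + TN_b) (A has strictly lower false positive rate). -/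
/-- At equal coverage, strictly lower risk implies strictly higher true positive rate
and strictly lower false positive rate, for two models with the same numbers of
positive and negative samples. -/
theorem roc_rc_key_step
    (TPa FPa TNa FNa TPb FPb TNb FNb : ℝ)
    (hTPa : 0 ≤ TPa) (hFPa : 0 ≤ FPa) (hTNa : 0 ≤ TNa) (hFNa : 0 ≤ FNa)
    (hTPb : 0 ≤ TPb) (hFPb : 0 ≤ FPb) (hTNb : 0 ≤ TNb) (hFNb : 0 ≤ FNb)
    (hpos : TPa + FNa = TPb + FNb) (hpos_pos : 0 < TPa + FNa)
    (hneg : FPa + TNa = FPb + TNb) (hneg_pos : 0 < FPa + TNa)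
    (hcov : TNa + FNa = TNb + FNb) (hcov_pos : 0 < TNa + FNa)
    (hrisk : FNa / (TNa + FNa) < FNb / (TNb + FNb)) :
    TPa / (TPa + FNa) > TPb / (TPb + FNb) ∧
    FPa / (FPa + TNa) < FPb / (FPb + TNb) := by
  rw [← hcov] at hrisk
  have hFN : FNa < FNb := by
    have := (div_lt_div_iff_of_pos_right hcov_pos).mp hrisk
    linarith
  constructor
  · rw [hpos]
    have : 0 < TPb + FNb := hpos ▸ hpos_pos
    apply div_lt_div_of_pos_right ?_ this
    linarith
  · rw [hneg]
    have : 0 < FPb + TNb := hneg ▸ hneg_pos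
    apply div_lt_div_of_pos_right ?_ this
    linarith
end

section
/- Let X be a nonempty finite set, c : X → ℝ with c x ∈ {0,1} for all x, and r : X → ℝ with 0 ≤ r x ≤ 1 for all x. Then r is perfectly calibrated and perfect for selective prediction if and only if for every x ∈ X, r x ∈ {0,1}, and moreover c x = 0 whenever r x = 0 and c x = 1 whenever r x = 1. -/
/-- Proposition 2: a confidence score is perfectly calibrated and perfect for
selective prediction iff every score is 0 or 1 and matches the correctness. -/
theorem perfect_calibration_and_selection_iff {α : Type*} [DecidableEq α]
    (X : Finset α) (hX : X.Nonempty)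
    (c r : α → ℝ)
    (hc : ∀ x ∈ X, c x = 0 ∨ c x = 1)
    (hr : ∀ x ∈ X, 0 ≤ r x ∧ r x ≤ 1) :
    ((∀ x ∈ X,
        (∑ y ∈ X.filter (fun y => r y = r x), c y) /
          ((X.filter (fun y => r y = r x)).card : ℝ) = r x) ∧
     (∀ a ∈ X, ∀ b ∈ X, c a = 1 → c b = 0 → r b < r a)) ↔
    (∀ x ∈ X, (r x = 0 ∨ r x = 1) ∧ (r x = 0 → c x = 0) ∧ (r x = 1 → c x = 1)) := by
  constructor
  · rintro ⟨hcal, hsel⟩ x hx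
    set S := X.filter (fun y => r y = r x) with hS
    have hxS : x ∈ S := by simp [hS, hx]
    have hcard : (S.card : ℝ) ≠ 0 := by
      exact_mod_cast Finset.card_ne_zero_of_mem hxS
    have hsum : ∑ y ∈ S, c y = r x * S.card := by
      have h := hcal x hx
      rw [div_eq_iff hcard] at h
      linarith
    have hconst : (∀ y ∈ S, c y = 0) ∨ (∀ y ∈ S, c y = 1) := by
      by_contra h
      push_neg at h
      obtain ⟨⟨b, hb, hb0⟩, ⟨a, ha, ha1⟩⟩ := h
      have hbX : b ∈ X := (Finset.mem_filter.mp hb).1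
      have haX : a ∈ X := (Finset.mem_filter.mp ha).1
      have hcb : c b = 1 := (hc b hbX).resolve_left hb0
      have hca : c a = 0 := (hc a haX).resolve_right ha1
      have hlt := hsel b hbX a haX hcb hca
      have hrb : r b = r x := (Finset.mem_filter.mp hb).2
      have hra : r a = r x := (Finset.mem_filter.mp ha).2
      linarith
    rcases hconst with h0 | h1
    · have hsum0 : ∑ y ∈ S, c y = 0 := Finset.sum_eq_zero h0
      have hrx : r x = 0 := by
        rw [hsum0] at hsum
        rcases mul_eq_zero.mp hsum.symm with h | h
        · exact h
        · exact absurd h hcard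
      exact ⟨Or.inl hrx, fun _ => h0 x hxS, fun h => absurd (hrx ▸ h) zero_ne_one⟩
    · have hsum1 : ∑ y ∈ S, c y = S.card := by
        rw [Finset.sum_congr rfl h1]; simp
      have hrx : r x = 1 := by
        rw [hsum1] at hsum
        have := mul_right_cancel₀ hcard (by linarith : r x * S.card = 1 * S.card)
        linarith
      exact ⟨Or.inr hrx, fun h => absurd (h.symm.trans hrx) (by norm_num), fun _ => h1 x hxS⟩
  · intro h
    constructor
    · intro x hx
      set S := X.filter (fun y => r y = r x) with hS
      have hxS : x ∈ S := by simp [hS, hx]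
      have hcard : (S.card : ℝ) ≠ 0 := by
        exact_mod_cast Finset.card_ne_zero_of_mem hxS
      rcases (h x hx).1 with h0 | h1
      · have : ∀ y ∈ S, c y = 0 := by
          intro y hy
          have hyX : y ∈ X := (Finset.mem_filter.mp hy).1
          have hry : r y = r x := (Finset.mem_filter.mp hy).2
          exact (h y hyX).2.1 (hry.trans h0)
        rw [Finset.sum_eq_zero this, h0, zero_div]
      · have : ∀ y ∈ S, c y = 1 := by
          intro y hy
          have hyX : y ∈ X := (Finset.mem_filter.mp hy).1
          have hry : r y = r x := (Finset.mem_filter.mp hy).2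
          exact (h y hyX).2.2 (hry.trans h1)
        rw [Finset.sum_congr rfl this, h1]
        simp [div_self hcard]
    · intro a ha b hb hca hcb
      have hra : r a = 1 := by
        rcases (h a ha).1 with h0 | h1
        · exact absurd ((h a ha).2.1 h0 ▸ hca) (by rw [(h a ha).2.1 h0] at hca; norm_num at hca)
        · exact h1
      have hrb : r b = 0 := by
        rcases (h b hb).1 with h0 | h1
        · exact h0
        · have := (h b hb).2.2 h1; rw [hcb] at this; norm_num at this
      rw [hra, hrb]; norm_num
end

section
/- Let X be a nonempty finite set, c : X → ℝ with c x ∈ {0,1} for all x, and r : X → ℝ with 0 ≤ r x ≤ 1 for all x. If r is perfectly calibrated and perfect for selective prediction, then r x ∈ {0,1} for every x ∈ X. -/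
/-- Forward direction of Proposition 2: perfect calibration together with perfect
selective prediction forces all confidence scores to be 0 or 1. -/
theorem perfect_both_implies_binary_scores {α : Type*} [DecidableEq α]
    (X : Finset α) (hX : X.Nonempty)
    (c r : α → ℝ)
    (hc : ∀ x ∈ X, c x = 0 ∨ c x = 1)
    (hr : ∀ x ∈ X, 0 ≤ r x ∧ r x ≤ 1)
    (hcal : ∀ x ∈ X,
      (∑ y ∈ X.filter (fun y => r y = r x), c y) /
        ((X.filter (fun y => r y = r x)).card : ℝ) = r x)
    (hsel : ∀ a ∈ X, ∀ b ∈ X, c a = 1 → c b = 0 → r b < r a) :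
    ∀ x ∈ X, r x = 0 ∨ r x = 1 := by
  intro x hx
  set S := X.filter (fun y => r y = r x) with hS
  have hxS : x ∈ S := Finset.mem_filter.mpr ⟨hx, rfl⟩
  have hcard : (0 : ℝ) < (S.card : ℝ) := by
    exact_mod_cast Finset.card_pos.mpr ⟨x, hxS⟩
  have hcal' := hcal x hx
  -- c is constant on S
  by_cases h0 : ∀ y ∈ S, c y = 0
  · left
    rw [← hcal', Finset.sum_congr rfl h0, Finset.sum_const, smul_zero, zero_div]
  · right
    push_neg at h0
    obtain ⟨a, haS, ha⟩ := h0
    have haX : a ∈ X := (Finset.mem_filter.mp haS).1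
    have ha1 : c a = 1 := (hc a haX).resolve_left ha
    have hall : ∀ y ∈ S, c y = 1 := by
      intro y hyS
      have hyX : y ∈ X := (Finset.mem_filter.mp hyS).1
      rcases hc y hyX with h | h
      · exfalso
        have := hsel a haX y hyX ha1 h
        have hy : r y = r x := (Finset.mem_filter.mp hyS).2
        have hA : r a = r x := (Finset.mem_filter.mp haS).2
        rw [hy, hA] at this
        exact lt_irrefl _ this
      · exact h
    rw [← hcal', Finset.sum_congr rfl hall, Finset.sum_const, nsmul_eq_mul, mul_one,
      div_self (ne_of_gt hcard)]
end
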